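/- Let α be irrational, let n₁ < n₂ < ... be integers with |n_k| ≤ K·ψ(k) for a nondecreasing ψ with ψ(k) → ∞, and suppose ‖qα‖ ≤ C q^{-γ} with |qα - p| = ‖qα‖. If N satisfies ψ(N) < q^γ/(3CK), then none of the points {n_k α}, k = 1,...,N, lies in the interval [1/(3q), 2/(3q)], hence D_N({n_k α}) ≥ 1/(3q). -/

import Mathlib

open Filter Real
open scoped Classical

/-- Distance from a real number to the nearest integer. -/
noncomputable def nint (x : ℝ) : ℝ := |x - round x|

/-- The discrepancy `D_N` of the first `N` terms of the sequence `x` modulo one. -/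
noncomputable def disc (N : ℕ) (x : ℕ → ℝ) : ℝ :=
  ⨆ p : {p : ℝ × ℝ // 0 ≤ p.1 ∧ p.1 < p.2 ∧ p.2 ≤ 1},
    |(∑ k ∈ Finset.Icc 1 N,
        if (p : ℝ × ℝ).1 ≤ Int.fract (x k) ∧ Int.fract (x k) < (p : ℝ × ℝ).2
        then (1 : ℝ) else 0) / N - ((p : ℝ × ℝ).2 - (p : ℝ × ℝ).1)|

theorem stmt16 (α : ℝ) (hα : Irrational α)
    (n : ℕ → ℤ) (hmono : StrictMono n)
    (ψ : ℕ → ℝ) (hψpos : ∀ k, 0 < ψ k) (hψmono : Monotone ψ)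
    (hψtop : Filter.Tendsto ψ Filter.atTop Filter.atTop)
    (K : ℝ) (hK : 0 < K) (hn : ∀ k : ℕ, 1 ≤ k → |(n k : ℝ)| ≤ K * ψ k)
    (γ C : ℝ) (hγ : 1 ≤ γ) (hC : 0 < C)
    (q : ℕ) (p : ℤ) (hq : 1 ≤ q)
    (hp : |(q : ℝ) * α - p| = nint ((q : ℝ) * α))
    (hqα : nint ((q : ℝ) * α) ≤ C * (q : ℝ) ^ (-γ))
    (N : ℕ) (hN : 1 ≤ N) (hψN : ψ N < (q : ℝ) ^ γ / (3 * C * K)) :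
    (∀ k : ℕ, 1 ≤ k → k ≤ N →
      Int.fract ((n k : ℝ) * α) ∉ Set.Icc (1 / (3 * (q : ℝ))) (2 / (3 * (q : ℝ))))
    ∧ 1 / (3 * (q : ℝ)) ≤ disc N (fun k => (n k : ℝ) * α) := by
  have hq0 : (0:ℝ) < (q:ℝ) := by exact_mod_cast hq
  set δ : ℝ := (q : ℝ) * α - p with hδdef
  have hδ : |δ| ≤ C * (q:ℝ) ^ (-γ) := by rw [hδdef, hp]; exact hqα
  have hpow : (0:ℝ) < (q:ℝ) ^ (-γ) := Real.rpow_pos_of_pos hq0 _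
  have hpow1 : (q:ℝ) ^ γ * (q:ℝ) ^ (-γ) = 1 := by
    rw [← Real.rpow_add hq0]; simp
  have main : ∀ k : ℕ, 1 ≤ k → k ≤ N →
      Int.fract ((n k : ℝ) * α) ∉ Set.Icc (1 / (3 * (q : ℝ))) (2 / (3 * (q : ℝ))) := by
    intro k hk1 hkN hmem
    obtain ⟨hmem1, hmem2⟩ := hmem
    have hnk : |(n k : ℝ)| ≤ K * ψ N :=
      le_trans (hn k hk1) (mul_le_mul_of_nonneg_left (hψmono hkN) hK.le)
    have hε : |(n k : ℝ) * δ| < 1/3 := by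
      have h1 : |(n k : ℝ) * δ| ≤ (K * ψ N) * (C * (q:ℝ) ^ (-γ)) := by
        rw [abs_mul]
        exact mul_le_mul hnk hδ (abs_nonneg _) (mul_nonneg hK.le (hψpos N).le)
      have h2 : (K * ψ N) * (C * (q:ℝ) ^ (-γ))
          < (K * ((q:ℝ)^γ / (3 * C * K))) * (C * (q:ℝ) ^ (-γ)) := by
        apply mul_lt_mul_of_pos_right _ (by positivity)
        exact mul_lt_mul_of_pos_left hψN hK
      have h3 : (K * ((q:ℝ)^γ / (3 * C * K))) * (C * (q:ℝ) ^ (-γ)) = 1/3 := by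
        field_simp
        linear_combination hpow1
      linarith
    set x : ℝ := Int.fract ((n k : ℝ) * α) with hxdef
    set j : ℤ := n k * p - (q:ℤ) * ⌊(n k : ℝ) * α⌋ with hjdef
    have hqx : (q:ℝ) * x = (j : ℝ) + (n k : ℝ) * δ := by
      rw [hxdef, Int.fract, hjdef]
      push_cast
      ring
    have hx1 : 1/3 ≤ (q:ℝ) * x := by
      have := mul_le_mul_of_nonneg_left hmem1 hq0.le
      calc (1:ℝ)/3 = (q:ℝ) * (1 / (3 * (q:ℝ))) := by field_simp
        _ ≤ (q:ℝ) * x := this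
    have hx2 : (q:ℝ) * x ≤ 2/3 := by
      have := mul_le_mul_of_nonneg_left hmem2 hq0.le
      calc (q:ℝ) * x ≤ (q:ℝ) * (2 / (3 * (q:ℝ))) := this
        _ = 2/3 := by field_simp
    have habs : |(q:ℝ) * x - (j:ℝ)| < 1/3 := by
      rw [hqx]; simpa using hε
    rw [abs_lt] at habs
    have hj0 : (0:ℝ) < (j:ℝ) := by linarith
    have hj1 : (j:ℝ) < 1 := by linarith
    have : (0:ℤ) < j := by exact_mod_cast hj0
    have : j < 1 := by exact_mod_cast hj1
    omega
  refine ⟨main, ?_⟩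
  have hq3 : (0:ℝ) < 1 / (3 * (q:ℝ)) := by positivity
  have hq1 : (1:ℝ) ≤ (q:ℝ) := by exact_mod_cast hq
  have hle : (2:ℝ) / (3 * (q:ℝ)) ≤ 1 := by
    rw [div_le_one (by positivity)]
    linarith
  have hPlt : 1 / (3 * (q:ℝ)) < 2 / (3 * (q:ℝ)) := by
    rw [div_lt_div_iff₀ (by positivity) (by positivity)]
    nlinarith
  set P : {p : ℝ × ℝ // 0 ≤ p.1 ∧ p.1 < p.2 ∧ p.2 ≤ 1} :=
    ⟨(1 / (3 * (q:ℝ)), 2 / (3 * (q:ℝ))), hq3.le, hPlt, hle⟩ with hP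
  have hbdd : BddAbove (Set.range fun (p : {p : ℝ × ℝ // 0 ≤ p.1 ∧ p.1 < p.2 ∧ p.2 ≤ 1}) =>
      |(∑ k ∈ Finset.Icc 1 N,
          if (p : ℝ × ℝ).1 ≤ Int.fract ((n k : ℝ) * α) ∧ Int.fract ((n k : ℝ) * α) < (p : ℝ × ℝ).2
          then (1 : ℝ) else 0) / N - ((p : ℝ × ℝ).2 - (p : ℝ × ℝ).1)|) := by
    refine ⟨2, ?_⟩
    rintro _ ⟨pp, rfl⟩
    obtain ⟨h1, h2, h3⟩ := pp.2
    have hS0 : (0:ℝ) ≤ ∑ k ∈ Finset.Icc 1 N,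
        if (pp : ℝ × ℝ).1 ≤ Int.fract ((n k : ℝ) * α) ∧ Int.fract ((n k : ℝ) * α) < (pp : ℝ × ℝ).2
        then (1 : ℝ) else 0 := by
      apply Finset.sum_nonneg; intro i _; split <;> norm_num
    have hSN : (∑ k ∈ Finset.Icc 1 N,
        if (pp : ℝ × ℝ).1 ≤ Int.fract ((n k : ℝ) * α) ∧ Int.fract ((n k : ℝ) * α) < (pp : ℝ × ℝ).2
        then (1 : ℝ) else 0) ≤ N := by
      calc _ ≤ ∑ k ∈ Finset.Icc 1 N, (1:ℝ) := by
              apply Finset.sum_le_sum; intro i _; split <;> norm_num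
        _ = N := by simp
    have hN0 : (0:ℝ) < N := by exact_mod_cast hN
    have hdivle : (∑ k ∈ Finset.Icc 1 N,
        if (pp : ℝ × ℝ).1 ≤ Int.fract ((n k : ℝ) * α) ∧ Int.fract ((n k : ℝ) * α) < (pp : ℝ × ℝ).2
        then (1 : ℝ) else 0) / N ≤ 1 := by
      rw [div_le_one hN0]; exact hSN
    have hdiv0 : (0:ℝ) ≤ (∑ k ∈ Finset.Icc 1 N,
        if (pp : ℝ × ℝ).1 ≤ Int.fract ((n k : ℝ) * α) ∧ Int.fract ((n k : ℝ) * α) < (pp : ℝ × ℝ).2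
        then (1 : ℝ) else 0) / N := by positivity
    rw [abs_le]
    constructor <;> [linarith; linarith]
  have hsum0 : (∑ k ∈ Finset.Icc 1 N,
      if (P : ℝ × ℝ).1 ≤ Int.fract ((n k : ℝ) * α) ∧ Int.fract ((n k : ℝ) * α) < (P : ℝ × ℝ).2
      then (1 : ℝ) else 0) = 0 := by
    apply Finset.sum_eq_zero
    intro k hk
    rw [Finset.mem_Icc] at hk
    have := main k hk.1 hk.2
    rw [if_neg]
    intro ⟨ha, hb⟩
    exact this ⟨ha, hb.le⟩
  have hval : |(∑ k ∈ Finset.Icc 1 N,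
      if (P : ℝ × ℝ).1 ≤ Int.fract ((n k : ℝ) * α) ∧ Int.fract ((n k : ℝ) * α) < (P : ℝ × ℝ).2
      then (1 : ℝ) else 0) / N - ((P : ℝ × ℝ).2 - (P : ℝ × ℝ).1)| = 1 / (3 * (q:ℝ)) := by
    rw [hsum0]
    have : ((P : ℝ × ℝ).2 - (P : ℝ × ℝ).1) = 1 / (3 * (q:ℝ)) := by
      show (2 / (3 * (q:ℝ)) - 1 / (3 * (q:ℝ))) = 1 / (3 * (q:ℝ))
      ring
    rw [this]
    simp [abs_of_nonneg hq3.le]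
  rw [← hval]
  exact le_ciSup hbdd P
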